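/- Let X and Y be Banach spaces, p ∈ (1,∞) with conjugate exponent p′, n ∈ ℕ, and u_1,…,u_n ∈ X, v_1,…,v_n ∈ Y. Let ε_1,…,ε_n be independent unbiased random signs on a probability space (Ω,ℱ,ℙ). Then ‖ Σ_{k=1}^n u_k ⊗ v_k ‖_{X⊗̂Y} ≤ ‖ Σ_{k=1}^n ε_k u_k ‖_{L^p(Ω;X)} · ‖ Σ_{k=1}^n ε_k v_k ‖_{L^{p′}(Ω;Y)}. -/

import Mathlib

open MeasureTheory
open scoped ENNReal TensorProduct

noncomputable section

/-- `ε 1, …, ε n` are independent unbiased random signs on the probability space `(Ω, ℙ)`. -/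
def IsRandomSigns {Ω : Type*} [MeasurableSpace Ω] (P : Measure Ω) {n : ℕ}
    (ε : Fin n → Ω → ℝ) : Prop :=
  (∀ k, Measurable (ε k)) ∧
    (∀ k, P {ω | ε k ω = 1} = 1 / 2 ∧ P {ω | ε k ω = -1} = 1 / 2) ∧
    ProbabilityTheory.iIndepFun (m := fun _ => (inferInstance : MeasurableSpace ℝ)) ε P

variable {X Y : Type*} [NormedAddCommGroup X] [NormedSpace ℝ X]
  [NormedAddCommGroup Y] [NormedSpace ℝ Y]

/-- The set of costs `Σ_k ‖x_k‖‖y_k‖` of finite representations `v = Σ_k x_k ⊗ y_k`. -/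
def projReps (v : X ⊗[ℝ] Y) : Set ℝ :=
  {c | ∃ (n : ℕ) (a : Fin n → X) (b : Fin n → Y),
    v = ∑ i, a i ⊗ₜ[ℝ] b i ∧ c = ∑ i, ‖a i‖ * ‖b i‖}

/-- The projective tensor norm `‖v‖_∧` on the algebraic tensor product `X ⊗ Y`. -/
def projNorm (v : X ⊗[ℝ] Y) : ℝ := sInf (projReps v)

private lemma sign_sum_eq {n : ℕ} (j k : Fin n) :
    ∑ s : Fin n → Bool, (if s j then (1:ℝ) else -1) * (if s k then (1:ℝ) else -1)
      = if j = k then (2^n : ℝ) else 0 := by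
  rcases eq_or_ne j k with rfl | hjk
  · rw [if_pos rfl]
    have h : ∀ s : Fin n → Bool,
        (if s j then (1:ℝ) else -1) * (if s j then (1:ℝ) else -1) = 1 := by
      intro s; by_cases h : s j <;> simp [h]
    rw [Finset.sum_congr rfl fun s _ => h s]
    simp [Finset.card_univ]
  · rw [if_neg hjk]
    set f : (Fin n → Bool) → ℝ :=
      fun s => (if s j then (1:ℝ) else -1) * (if s k then (1:ℝ) else -1) with hf
    have hinv : Function.Involutive (fun s : Fin n → Bool => Function.update s j (!s j)) := by
      intro s; funext i
      rcases eq_or_ne i j with rfl | h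
      · simp
      · simp [Function.update_of_ne h]
    set e : Equiv.Perm (Fin n → Bool) :=
      ⟨fun s => Function.update s j (!s j), fun s => Function.update s j (!s j), hinv, hinv⟩
      with he'
    have he := Equiv.sum_comp e f
    have hneg : ∀ s, f (e s) = - f s := by
      intro s
      have h1 : (e s) j = !s j := by show Function.update s j (!s j) j = !s j; simp
      have h2 : (e s) k = s k := by
        show Function.update s j (!s j) k = s k; simp [Function.update_of_ne (Ne.symm hjk)]
      simp only [hf, h1, h2]
      by_cases hb : s j <;> by_cases hc : s k <;> simp [hb, hc]
    rw [Finset.sum_congr rfl fun s _ => hneg s, Finset.sum_neg_distrib] at he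
    linarith

private lemma tensor_rep {X Y : Type*} [AddCommGroup X] [Module ℝ X] [AddCommGroup Y] [Module ℝ Y]
    (n : ℕ) (u : Fin n → X) (v : Fin n → Y) :
    ∑ k, u k ⊗ₜ[ℝ] v k =
      ∑ s : Fin n → Bool, ((1/2:ℝ)^n) •
        ((∑ j, (if s j then (1:ℝ) else -1) • u j) ⊗ₜ[ℝ]
          (∑ k, (if s k then (1:ℝ) else -1) • v k)) := by
  have expand : ∀ s : Fin n → Bool,
      ((∑ j, (if s j then (1:ℝ) else -1) • u j) ⊗ₜ[ℝ]
          (∑ k, (if s k then (1:ℝ) else -1) • v k))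
        = ∑ j, ∑ k, ((if s j then (1:ℝ) else -1) * (if s k then (1:ℝ) else -1)) •
            (u j ⊗ₜ[ℝ] v k) := by
    intro s
    rw [TensorProduct.sum_tmul]
    refine Finset.sum_congr rfl fun j _ => ?_
    rw [TensorProduct.tmul_sum]
    refine Finset.sum_congr rfl fun k _ => ?_
    rw [TensorProduct.smul_tmul_smul]
  calc ∑ k, u k ⊗ₜ[ℝ] v k
      = ∑ j, ∑ k, ((1/2:ℝ)^n * (if j = k then (2^n : ℝ) else 0)) • (u j ⊗ₜ[ℝ] v k) := by
        refine Finset.sum_congr rfl fun j _ => ?_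
        rw [Finset.sum_eq_single j]
        · rw [if_pos rfl]
          have : (1/2:ℝ)^n * 2^n = 1 := by
            rw [← mul_pow]; norm_num
          rw [this, one_smul]
        · intro k _ hk; rw [if_neg (Ne.symm hk), mul_zero, zero_smul]
        · intro h; exact absurd (Finset.mem_univ j) h
    _ = ∑ j, ∑ k, ∑ s : Fin n → Bool, ((1/2:ℝ)^n *
          ((if s j then (1:ℝ) else -1) * (if s k then (1:ℝ) else -1))) •
            (u j ⊗ₜ[ℝ] v k) := by
        refine Finset.sum_congr rfl fun j _ => Finset.sum_congr rfl fun k _ => ?_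
        rw [← Finset.sum_smul, ← Finset.mul_sum, sign_sum_eq]
    _ = ∑ s : Fin n → Bool, ((1/2:ℝ)^n) •
        ((∑ j, (if s j then (1:ℝ) else -1) • u j) ⊗ₜ[ℝ]
          (∑ k, (if s k then (1:ℝ) else -1) • v k)) := by
        simp only [expand, Finset.smul_sum, smul_smul]
        have h1 : ∀ j : Fin n,
            (∑ k : Fin n, ∑ s : Fin n → Bool,
              ((1/2:ℝ) ^ n * ((if s j then (1:ℝ) else -1) * if s k then (1:ℝ) else -1)) •
                u j ⊗ₜ[ℝ] v k)
            = ∑ s : Fin n → Bool, ∑ k : Fin n,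
              ((1/2:ℝ) ^ n * ((if s j then (1:ℝ) else -1) * if s k then (1:ℝ) else -1)) •
                u j ⊗ₜ[ℝ] v k := fun j => Finset.sum_comm
        rw [Finset.sum_congr rfl fun j _ => h1 j]
        exact Finset.sum_comm

/-- `‖Σ_k u_k ⊗ v_k‖_{X⊗̂Y} ≤ ‖Σ_k ε_k u_k‖_{L^p(Ω;X)} ‖Σ_k ε_k v_k‖_{L^{p'}(Ω;Y)}`
for independent unbiased random signs `ε_k`. -/
theorem statement6 (X Y : Type*)
    [NormedAddCommGroup X] [NormedSpace ℝ X] [NormedAddCommGroup Y] [NormedSpace ℝ Y]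
    (p q : ℝ) (hp : 1 < p) (hpq : 1 / p + 1 / q = 1)
    (n : ℕ) (u : Fin n → X) (v : Fin n → Y)
    (Ω : Type*) [MeasurableSpace Ω] (P : Measure Ω) [IsProbabilityMeasure P]
    (ε : Fin n → Ω → ℝ) (hε : IsRandomSigns P ε) :
    projNorm (∑ k, u k ⊗ₜ[ℝ] v k) ≤
      (eLpNorm (fun ω => ∑ k, ε k ω • u k) (ENNReal.ofReal p) P).toReal *
        (eLpNorm (fun ω => ∑ k, ε k ω • v k) (ENNReal.ofReal q) P).toReal := by
  obtain ⟨hmeas, hval, hind⟩ := hε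
  set f : Ω → X := fun ω => ∑ k, ε k ω • u k with hfdef
  set g : Ω → Y := fun ω => ∑ k, ε k ω • v k with hgdef
  set fs : (Fin n → Bool) → X := fun s => ∑ j, (if s j then (1:ℝ) else -1) • u j with hfsdef
  set gs : (Fin n → Bool) → Y := fun s => ∑ j, (if s j then (1:ℝ) else -1) • v j with hgsdef
  set A : (Fin n → Bool) → Set Ω :=
    fun s => ⋂ k, ε k ⁻¹' {if s k then (1:ℝ) else -1} with hAdef
  have hAmeas : ∀ s, MeasurableSet (A s) := fun s =>
    MeasurableSet.iInter fun k => (hmeas k) (measurableSet_singleton _)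
  have hPA : ∀ s, P (A s) = (2:ℝ≥0∞)⁻¹ ^ n := by
    intro s
    have h := (ProbabilityTheory.iIndepFun_iff_measure_inter_preimage_eq_mul.mp hind)
      Finset.univ (sets := fun k => {if s k then (1:ℝ) else -1})
      (fun i _ => measurableSet_singleton _)
    have hpre : ∀ k : Fin n, P (ε k ⁻¹' {if s k then (1:ℝ) else -1}) = 2⁻¹ := by
      intro k
      by_cases hb : s k
      · have := (hval k).1
        rw [one_div] at this
        simpa [hb, Set.preimage, Set.mem_singleton_iff] using this
      · have := (hval k).2
        rw [one_div] at this
        simpa [hb, Set.preimage, Set.mem_singleton_iff] using this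
    rw [hAdef]
    simp only [Set.iInter_true]
    rw [show (⋂ k, ε k ⁻¹' {if s k then (1:ℝ) else -1})
        = ⋂ k ∈ Finset.univ, ε k ⁻¹' {if s k then (1:ℝ) else -1} by simp]
    rw [h, Finset.prod_congr rfl fun k _ => hpre k, Finset.prod_const, Finset.card_univ]
    simp
  -- step 1: projNorm bound by the cost of the Bool-indexed representation
  have hcost : projNorm (∑ k, u k ⊗ₜ[ℝ] v k) ≤
      ∑ s : Fin n → Bool, ((1/2:ℝ)^n * ‖fs s‖) * ‖gs s‖ := by
    apply csInf_le
    · refine ⟨0, fun x hx => ?_⟩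
      obtain ⟨m, a, b, -, rfl⟩ := hx
      positivity
    · refine ⟨Fintype.card (Fin n → Bool),
        fun i => ((1/2:ℝ)^n) • fs ((Fintype.equivFin _).symm i),
        fun i => gs ((Fintype.equivFin _).symm i), ?_, ?_⟩
      · rw [tensor_rep n u v,
          ← Equiv.sum_comp (Fintype.equivFin (Fin n → Bool)).symm
            (fun s => ((1/2:ℝ)^n) • (fs s ⊗ₜ[ℝ] gs s))]
        exact Finset.sum_congr rfl fun i _ => (TensorProduct.smul_tmul' _ _ _).symm
      · rw [← Equiv.sum_comp (Fintype.equivFin (Fin n → Bool)).symm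
            (fun s => ((1/2:ℝ)^n * ‖fs s‖) * ‖gs s‖)]
        refine Finset.sum_congr rfl fun i _ => ?_
        rw [norm_smul, Real.norm_eq_abs, abs_of_nonneg (by positivity)]
  -- the ENNReal cost
  set c : (Fin n → Bool) → ℝ≥0∞ := fun s => (‖fs s‖₊ : ℝ≥0∞) * (‖gs s‖₊ : ℝ≥0∞) with hcdef
  -- step 2: pointwise bound
  have hpt : ∀ ω, (∑ s : Fin n → Bool, (A s).indicator (fun _ => c s) ω)
      ≤ (‖f ω‖₊ : ℝ≥0∞) * (‖g ω‖₊ : ℝ≥0∞) := by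
    intro ω
    by_cases h : ∃ t, ω ∈ A t
    · obtain ⟨t, ht⟩ := h
      have hω : ∀ k, ε k ω = if t k then (1:ℝ) else -1 := by
        intro k
        have := Set.mem_iInter.mp ht k
        simpa using this
      have hfω : f ω = fs t := by
        rw [hfdef, hfsdef]
        exact Finset.sum_congr rfl fun k _ => by rw [hω k]
      have hgω : g ω = gs t := by
        rw [hgdef, hgsdef]
        exact Finset.sum_congr rfl fun k _ => by rw [hω k]
      have hsum : ∑ s : Fin n → Bool, (A s).indicator (fun _ => c s) ω = c t := by
        rw [Finset.sum_eq_single t]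
        · rw [Set.indicator_of_mem ht]
        · intro s _ hs
          rw [Set.indicator_of_notMem]
          intro hmem
          apply hs
          funext k
          have h1 := Set.mem_iInter.mp hmem k
          simp only [Set.mem_preimage, Set.mem_singleton_iff] at h1
          have h2 := hω k
          rw [h1] at h2
          cases hb : s k <;> cases hb' : t k
          · rfl
          · norm_num [hb, hb'] at h2
          · norm_num [hb, hb'] at h2
          · rfl
        · intro h; exact absurd (Finset.mem_univ t) h
      rw [hsum, hfω, hgω]
    · push_neg at h
      rw [Finset.sum_eq_zero fun s _ => Set.indicator_of_notMem (h s) _]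
      exact zero_le
  -- step 3: integrate
  have hint : ∑ s : Fin n → Bool, c s * (2:ℝ≥0∞)⁻¹ ^ n ≤
      ∫⁻ ω, (‖f ω‖₊ : ℝ≥0∞) * (‖g ω‖₊ : ℝ≥0∞) ∂P := by
    calc ∑ s : Fin n → Bool, c s * (2:ℝ≥0∞)⁻¹ ^ n
        = ∑ s : Fin n → Bool, ∫⁻ ω, (A s).indicator (fun _ => c s) ω ∂P := by
          refine Finset.sum_congr rfl fun s _ => ?_
          rw [lintegral_indicator (hAmeas s), setLIntegral_const, hPA s]
      _ = ∫⁻ ω, ∑ s : Fin n → Bool, (A s).indicator (fun _ => c s) ω ∂P :=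
          (lintegral_finset_sum _ fun s _ => measurable_const.indicator (hAmeas s)).symm
      _ ≤ _ := lintegral_mono hpt
  -- measurability
  have hfn : Measurable fun ω => ‖f ω‖ := by
    have h1 : Measurable fun ω => (fun k => ε k ω : Fin n → ℝ) :=
      measurable_pi_lambda _ hmeas
    have h2 : Continuous fun x : Fin n → ℝ => ‖∑ k, x k • u k‖ := by
      apply Continuous.norm
      exact continuous_finset_sum _ fun k _ => (continuous_apply k).smul continuous_const
    exact h2.measurable.comp h1
  have hgn : Measurable fun ω => ‖g ω‖ := by
    have h1 : Measurable fun ω => (fun k => ε k ω : Fin n → ℝ) :=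
      measurable_pi_lambda _ hmeas
    have h2 : Continuous fun x : Fin n → ℝ => ‖∑ k, x k • v k‖ := by
      apply Continuous.norm
      exact continuous_finset_sum _ fun k _ => (continuous_apply k).smul continuous_const
    exact h2.measurable.comp h1
  have hF : Measurable fun ω => (‖f ω‖₊ : ℝ≥0∞) := by
    simp only [← enorm_eq_nnnorm, ← ofReal_norm]
    exact ENNReal.measurable_ofReal.comp hfn
  have hG : Measurable fun ω => (‖g ω‖₊ : ℝ≥0∞) := by
    simp only [← enorm_eq_nnnorm, ← ofReal_norm]
    exact ENNReal.measurable_ofReal.comp hgn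
  -- conjugate exponents
  have hp0 : 0 < p := lt_trans one_pos hp
  have hq1 : 1 < q := by
    have h1 : 1 / q = 1 - 1 / p := by linarith
    have h2 : 0 < 1 / q := by
      have : 1 / p < 1 := by rw [div_lt_one hp0]; exact hp
      rw [h1]; linarith
    have hq0 : 0 < q := one_div_pos.mp h2
    have h3 : 1 / q < 1 := by
      have : 0 < 1 / p := by positivity
      rw [h1]; linarith
    exact (div_lt_one hq0).mp h3
  have hq0 : 0 < q := lt_trans one_pos hq1
  have hconj : Real.HolderConjugate p q := Real.holderConjugate_iff.mpr ⟨hp, by rw [← one_div, ← one_div]; exact hpq⟩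
  have hholder : ∫⁻ ω, (‖f ω‖₊ : ℝ≥0∞) * (‖g ω‖₊ : ℝ≥0∞) ∂P ≤
      eLpNorm f (ENNReal.ofReal p) P * eLpNorm g (ENNReal.ofReal q) P := by
    have h := ENNReal.lintegral_mul_le_Lp_mul_Lq P hconj hF.aemeasurable hG.aemeasurable
    rw [eLpNorm_eq_lintegral_rpow_enorm_toReal (ENNReal.ofReal_pos.mpr hp0).ne' ENNReal.ofReal_ne_top,
        eLpNorm_eq_lintegral_rpow_enorm_toReal (ENNReal.ofReal_pos.mpr hq0).ne' ENNReal.ofReal_ne_top,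
        ENNReal.toReal_ofReal hp0.le, ENNReal.toReal_ofReal hq0.le]
    simpa [Pi.mul_apply, enorm_eq_nnnorm] using h
  -- a.e. boundedness
  have hae : ∀ k : Fin n, ∀ᵐ ω ∂P, ε k ω = 1 ∨ ε k ω = -1 := by
    intro k
    have hm1 : MeasurableSet {ω | ε k ω = 1} := hmeas k (measurableSet_singleton 1)
    have hm2 : MeasurableSet {ω | ε k ω = -1} := hmeas k (measurableSet_singleton (-1))
    have hdisj : Disjoint {ω | ε k ω = 1} {ω | ε k ω = -1} := by
      rw [Set.disjoint_left]
      rintro ω h1 h2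
      simp only [Set.mem_setOf_eq] at h1 h2
      rw [h1] at h2; norm_num at h2
    have hunion : P ({ω | ε k ω = 1} ∪ {ω | ε k ω = -1}) = 1 := by
      rw [measure_union hdisj hm2, (hval k).1, (hval k).2, ENNReal.add_halves]
    have hcompl : P ({ω | ε k ω = 1} ∪ {ω | ε k ω = -1})ᶜ = 0 := by
      rw [prob_compl_eq_one_sub (hm1.union hm2), hunion, tsub_self]
    rw [ae_iff]
    have hset : {ω | ¬(ε k ω = 1 ∨ ε k ω = -1)}
        = ({ω | ε k ω = 1} ∪ {ω | ε k ω = -1})ᶜ := by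
      ext ω; simp [not_or]
    rw [hset]
    exact hcompl
  have haeAll : ∀ᵐ ω ∂P, ∀ k, ε k ω = 1 ∨ ε k ω = -1 := ae_all_iff.mpr hae
  have hbf : ∀ᵐ ω ∂P, ‖f ω‖ ≤ ∑ k, ‖u k‖ := by
    filter_upwards [haeAll] with ω hω
    calc ‖f ω‖ ≤ ∑ k, ‖ε k ω • u k‖ := norm_sum_le _ _
      _ = ∑ k, ‖u k‖ := Finset.sum_congr rfl fun k _ => by
          rcases hω k with h | h <;> rw [norm_smul, h] <;> simp
  have hbg : ∀ᵐ ω ∂P, ‖g ω‖ ≤ ∑ k, ‖v k‖ := by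
    filter_upwards [haeAll] with ω hω
    calc ‖g ω‖ ≤ ∑ k, ‖ε k ω • v k‖ := norm_sum_le _ _
      _ = ∑ k, ‖v k‖ := Finset.sum_congr rfl fun k _ => by
          rcases hω k with h | h <;> rw [norm_smul, h] <;> simp
  have hfinf : eLpNorm f (ENNReal.ofReal p) P ≠ ⊤ := by
    refine ne_top_of_le_ne_top ?_ (eLpNorm_le_of_ae_bound hbf)
    simp [measure_univ]
  have hginf : eLpNorm g (ENNReal.ofReal q) P ≠ ⊤ := by
    refine ne_top_of_le_ne_top ?_ (eLpNorm_le_of_ae_bound hbg)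
    simp [measure_univ]
  have hAB : eLpNorm f (ENNReal.ofReal p) P * eLpNorm g (ENNReal.ofReal q) P ≠ ⊤ :=
    ENNReal.mul_ne_top hfinf hginf
  have hle : (∑ s : Fin n → Bool, c s * (2:ℝ≥0∞)⁻¹ ^ n).toReal ≤
      (eLpNorm f (ENNReal.ofReal p) P * eLpNorm g (ENNReal.ofReal q) P).toReal :=
    ENNReal.toReal_mono hAB (hint.trans hholder)
  have heq : (∑ s : Fin n → Bool, c s * (2:ℝ≥0∞)⁻¹ ^ n).toReal
      = ∑ s : Fin n → Bool, ((1/2:ℝ)^n * ‖fs s‖) * ‖gs s‖ := by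
    rw [ENNReal.toReal_sum (fun s _ => ENNReal.mul_ne_top
      (ENNReal.mul_ne_top ENNReal.coe_ne_top ENNReal.coe_ne_top) (by simp))]
    refine Finset.sum_congr rfl fun s _ => ?_
    simp only [hcdef, ENNReal.toReal_mul, ENNReal.toReal_pow, ENNReal.toReal_inv,
      ENNReal.coe_toReal, coe_nnnorm, ENNReal.toReal_ofNat]
    rw [← one_div]
    ring
  calc projNorm (∑ k, u k ⊗ₜ[ℝ] v k)
      ≤ ∑ s : Fin n → Bool, ((1/2:ℝ)^n * ‖fs s‖) * ‖gs s‖ := hcost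
    _ = (∑ s : Fin n → Bool, c s * (2:ℝ≥0∞)⁻¹ ^ n).toReal := heq.symm
    _ ≤ _ := hle
    _ = _ := ENNReal.toReal_mul
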